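/- Let f(w) = w/(b(1+aw)) and g(w) = bw + c with b ≠ 0, |a| < 1, |c/b| < 1. Then the contour integrals t_n := (1/(2πi n)) ∮_{S¹} g(w)^{−n}/f(w) · g'(w) dw vanish for all n ≥ 2, and t₁ := (1/(2πi)) ∮_{S¹} g(w)^{−1}/f(w) · g'(w) dw = ab. -/

import Mathlib

open Complex Metric

lemma sphere_ne_zero {w : ℂ} (hw : w ∈ sphere (0:ℂ) 1) : w ≠ 0 := by
  intro h
  rw [mem_sphere_iff_norm, sub_zero, h] at hw
  simp at hw

lemma sphere_add_ne {d w : ℂ} (hd : ‖d‖ < 1) (hw : w ∈ sphere (0:ℂ) 1) :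
    w + d ≠ 0 := by
  intro h
  rw [mem_sphere_iff_norm, sub_zero] at hw
  have : w = -d := by linear_combination h
  rw [this, norm_neg] at hw
  rw [hw] at hd
  exact absurd hd (lt_irrefl _)

lemma int_add_inv (d : ℂ) (hd : ‖d‖ < 1) :
    (∮ w in C(0,1), (w + d)⁻¹) = 2 * Real.pi * Complex.I := by
  have h : ∀ w : ℂ, (w + d)⁻¹ = (w - (-d))⁻¹ := fun w => by rw [sub_neg_eq_add]
  simp_rw [h]
  exact circleIntegral.integral_sub_inv_of_mem_ball
    (by simpa using hd)

lemma int_inv : (∮ w in C(0,1), w⁻¹) = 2 * Real.pi * Complex.I := by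
  have := int_add_inv 0 (by simp)
  simpa using this

lemma int_add_pow_inv (d : ℂ) (n : ℕ) (hn : 2 ≤ n) :
    (∮ w in C(0,1), ((w + d) ^ n)⁻¹) = 0 := by
  have h : ∀ w : ℂ, ((w + d) ^ n)⁻¹ = (w - (-d)) ^ (-(n:ℤ)) := fun w => by
    rw [zpow_neg, zpow_natCast, sub_neg_eq_add]
  simp_rw [h]
  refine circleIntegral.integral_sub_zpow_of_ne ?_ _ _ _
  have : (2:ℤ) ≤ (n:ℤ) := by exact_mod_cast hn
  omega

lemma int_add_pow_one_inv (d : ℂ) (hd : ‖d‖ < 1) :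
    (∮ w in C(0,1), ((w + d) ^ 1)⁻¹) = 2 * Real.pi * Complex.I := by
  simp_rw [pow_one]
  exact int_add_inv d hd

lemma intble_inv_add (d : ℂ) (hd : ‖d‖ < 1) (m : ℕ) :
    CircleIntegrable (fun w : ℂ => ((w + d) ^ m)⁻¹) 0 1 := by
  refine ContinuousOn.circleIntegrable zero_le_one ?_
  refine ContinuousOn.inv₀ (by fun_prop) ?_
  intro w hw
  exact pow_ne_zero _ (sphere_add_ne hd hw)

lemma intble_key (d : ℂ) (hd : ‖d‖ < 1) (m : ℕ) :
    CircleIntegrable (fun w : ℂ => (w * (w + d) ^ m)⁻¹) 0 1 := by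
  refine ContinuousOn.circleIntegrable zero_le_one ?_
  refine ContinuousOn.inv₀ (by fun_prop) ?_
  intro w hw
  exact mul_ne_zero (sphere_ne_zero hw) (pow_ne_zero _ (sphere_add_ne hd hw))

lemma intble_const_mul (k : ℂ) {F : ℂ → ℂ} {c : ℂ} {R : ℝ} (h : CircleIntegrable F c R) :
    CircleIntegrable (fun w => k * F w) c R := by
  simpa [CircleIntegrable, smul_eq_mul, mul_left_comm] using h.const_mul k

lemma my_integral_add {f g : ℂ → ℂ} {c : ℂ} {R : ℝ} (hf : CircleIntegrable f c R)
    (hg : CircleIntegrable g c R) :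
    (∮ w in C(c,R), (f w + g w)) = (∮ w in C(c,R), f w) + (∮ w in C(c,R), g w) := by
  have hneg : (∮ w in C(c,R), -g w) = -(∮ w in C(c,R), g w) := by
    simpa using circleIntegral.integral_const_mul (-1) g c R
  have h2 := circleIntegral.integral_sub hf hg.neg
  simp only [Pi.neg_apply] at h2
  rw [hneg] at h2
  simpa [sub_neg_eq_add] using h2

lemma key (d : ℂ) (hd0 : d ≠ 0) (hd : ‖d‖ < 1) :
    ∀ n : ℕ, 1 ≤ n → (∮ w in C(0,1), (w * (w + d) ^ n)⁻¹) = 0 := by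
  intro n hn
  induction n, hn using Nat.le_induction with
  | base =>
    have congr1 : Set.EqOn (fun w : ℂ => (w * (w + d) ^ 1)⁻¹)
        (fun w => d⁻¹ * (w⁻¹ - (w + d)⁻¹)) (sphere 0 1) := by
      intro w hw
      have h1 := sphere_ne_zero hw
      have h2 := sphere_add_ne hd hw
      simp only [pow_one]
      field_simp
      ring
    rw [circleIntegral.integral_congr zero_le_one congr1,
        circleIntegral.integral_const_mul]
    have hsub : (∮ w in C(0,1), (w⁻¹ - (w + d)⁻¹)) = 0 := by
      rw [circleIntegral.integral_sub
        (by simpa using intble_inv_add 0 (by simp) 1)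
        (by simpa using intble_inv_add d hd 1)]
      rw [int_inv, int_add_inv d hd, sub_self]
    rw [hsub, mul_zero]
  | succ n hn ih =>
    have congr1 : Set.EqOn (fun w : ℂ => (w * (w + d) ^ (n+1))⁻¹)
        (fun w => d⁻¹ * ((w * (w + d) ^ n)⁻¹ - ((w + d) ^ (n+1))⁻¹)) (sphere 0 1) := by
      intro w hw
      have h1 := sphere_ne_zero hw
      have h2 := sphere_add_ne hd hw
      simp only [pow_succ]
      have hpn : (w + d) ^ n ≠ 0 := pow_ne_zero _ h2
      rw [inv_sub_inv (mul_ne_zero h1 hpn) (mul_ne_zero hpn h2)]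
      have hdd : (w + d) ^ n * (w + d) - w * (w + d) ^ n = (w + d) ^ n * d := by ring
      rw [hdd]
      field_simp
    rw [circleIntegral.integral_congr zero_le_one congr1,
        circleIntegral.integral_const_mul,
        circleIntegral.integral_sub (intble_key d hd n) (intble_inv_add d hd (n+1)),
        ih, int_add_pow_inv d (n+1) (by omega), sub_self, mul_zero]

/-- For the Möbius pair `f(w) = w/(b(1+aw))`, `g(w) = bw + c` (so `1/f(w) = b(1+aw)/w`
and `g'(w) = b`), the time variables `t_n = (1/(2πin)) ∮ g(w)^{−n}/f(w) · g'(w) dw`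
vanish for `n ≥ 2`, and `t₁ = ab`. -/
theorem mobius_times_vanish
    (a b c : ℂ) (hb : b ≠ 0) (ha : ‖a‖ < 1) (hc : ‖c / b‖ < 1) :
    (∀ n : ℕ, 2 ≤ n →
      (2 * Real.pi * Complex.I * n)⁻¹ *
        (∮ w in C(0, 1), (b * w + c) ^ (-(n : ℤ)) * (b * (1 + a * w) / w) * b) = 0) ∧
    (2 * Real.pi * Complex.I)⁻¹ *
        (∮ w in C(0, 1), (b * w + c)⁻¹ * (b * (1 + a * w) / w) * b) = a * b := by
  have h2pi : (2 : ℂ) * Real.pi * Complex.I ≠ 0 :=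
    mul_ne_zero (mul_ne_zero two_ne_zero (ofReal_ne_zero.mpr Real.pi_ne_zero)) I_ne_zero
  set d : ℂ := c / b with hd_def
  have hbc : ∀ w : ℂ, b * w + c = b * (w + d) := by
    intro w
    rw [hd_def]
    field_simp
  constructor
  · intro n hn
    by_cases hc0 : c = 0
    · have hd0 : d = 0 := by rw [hd_def, hc0, zero_div]
      have congr1 : Set.EqOn
          (fun w : ℂ => (b * w + c) ^ (-(n : ℤ)) * (b * (1 + a * w) / w) * b)
          (fun w => ((b ^ n)⁻¹ * b ^ 2) * ((w + 0) ^ (n+1))⁻¹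
            + ((b ^ n)⁻¹ * b ^ 2 * a) * ((w + 0) ^ n)⁻¹) (sphere 0 1) := by
        intro w hw
        have h1 := sphere_ne_zero hw
        simp only [hc0, add_zero, zpow_neg, zpow_natCast]
        rw [mul_pow]
        field_simp
        ring
      rw [circleIntegral.integral_congr zero_le_one congr1,
          my_integral_add (intble_const_mul _ (intble_inv_add 0 (by simp) (n+1)))
            (intble_const_mul _ (intble_inv_add 0 (by simp) n)),
          circleIntegral.integral_const_mul, circleIntegral.integral_const_mul,
          int_add_pow_inv 0 (n+1) (by omega), int_add_pow_inv 0 n hn]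
      simp
    · have hd0 : d ≠ 0 := div_ne_zero hc0 hb
      have congr1 : Set.EqOn
          (fun w : ℂ => (b * w + c) ^ (-(n : ℤ)) * (b * (1 + a * w) / w) * b)
          (fun w => ((b ^ n)⁻¹ * b ^ 2 * a) * ((w + d) ^ n)⁻¹
            + ((b ^ n)⁻¹ * b ^ 2) * (w * (w + d) ^ n)⁻¹) (sphere 0 1) := by
        intro w hw
        have h1 := sphere_ne_zero hw
        have h2 := sphere_add_ne hc hw
        have hx : b * (1 + a * w) / w = b * a + b * w⁻¹ := by
          field_simp
          ring
        simp only [zpow_neg, zpow_natCast, hbc w, mul_pow, mul_inv, hx]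
        ring
      rw [circleIntegral.integral_congr zero_le_one congr1,
          my_integral_add (intble_const_mul _ (intble_inv_add d hc n))
            (intble_const_mul _ (intble_key d hc n)),
          circleIntegral.integral_const_mul, circleIntegral.integral_const_mul,
          int_add_pow_inv d n hn, key d hd0 hc n (by omega)]
      simp
  · by_cases hc0 : c = 0
    · have congr1 : Set.EqOn
          (fun w : ℂ => (b * w + c)⁻¹ * (b * (1 + a * w) / w) * b)
          (fun w => b * ((w + 0) ^ 2)⁻¹ + (a * b) * ((w + 0) ^ 1)⁻¹) (sphere 0 1) := by
        intro w hw
        have h1 := sphere_ne_zero hw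
        simp only [hc0, add_zero, pow_one, pow_two]
        field_simp
      rw [circleIntegral.integral_congr zero_le_one congr1,
          my_integral_add (intble_const_mul _ (intble_inv_add 0 (by simp) 2))
            (intble_const_mul _ (intble_inv_add 0 (by simp) 1)),
          circleIntegral.integral_const_mul, circleIntegral.integral_const_mul,
          int_add_pow_inv 0 2 le_rfl, int_add_pow_one_inv 0 (by simp)]
      field_simp
      ring
    · have hd0 : d ≠ 0 := div_ne_zero hc0 hb
      have congr1 : Set.EqOn
          (fun w : ℂ => (b * w + c)⁻¹ * (b * (1 + a * w) / w) * b)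
          (fun w => (a * b) * ((w + d) ^ 1)⁻¹ + b * (w * (w + d) ^ 1)⁻¹) (sphere 0 1) := by
        intro w hw
        have h1 := sphere_ne_zero hw
        have h2 := sphere_add_ne hc hw
        simp only [pow_one, hbc w]
        field_simp
        ring
      rw [circleIntegral.integral_congr zero_le_one congr1,
          my_integral_add (intble_const_mul _ (intble_inv_add d hc 1))
            (intble_const_mul _ (intble_key d hc 1)),
          circleIntegral.integral_const_mul, circleIntegral.integral_const_mul,
          int_add_pow_one_inv d hc, key d hd0 hc 1 le_rfl]
      field_simp
      ring
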